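/- arXiv:1401.7402 — 3 statements merged into one kernel-verified Lean document; each statement's English description precedes it below -/
import Mathlib

section
/- Let n ≥ 2 and 0 < α < 2. Let ψ ∈ C_c^∞(ℝⁿ) satisfy ∫_{ℝⁿ} ψ(x) dx = 0, and define φ(x) = ∫_{ℝⁿ} ψ(y) |x−y|^{−(n−α)} dy. Then φ(x) = O(|x|^{−(n−α+1)}) as |x| → ∞; that is, there exist constants C > 0 and R > 0 such that |φ(x)| ≤ C |x|^{−(n−α+1)} for all |x| ≥ R. -/
open MeasureTheory Filter Metric

lemma rpow_neg_sub_le_aux {β : ℝ} (hβ : 0 < β) {a b c : ℝ} (hc : 0 < c) (ha : c ≤ a)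
    (hb : c ≤ b) : |a ^ (-β) - b ^ (-β)| ≤ β * c ^ (-β - 1) * |a - b| := by
  have h := Convex.norm_image_sub_le_of_norm_hasDerivWithin_le
    (f := fun t : ℝ => t ^ (-β)) (f' := fun t : ℝ => -β * t ^ (-β - 1))
    (s := Set.Ici c) (C := β * c ^ (-β - 1))
    (fun t ht => (Real.hasDerivAt_rpow_const (Or.inl (by
      have : (0:ℝ) < t := lt_of_lt_of_le hc ht
      linarith))).hasDerivWithinAt)
    (fun t ht => by
      have ht' : (0:ℝ) < t := lt_of_lt_of_le hc ht
      have h1 : t ^ (-β - 1) ≤ c ^ (-β - 1) :=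
        Real.rpow_le_rpow_of_nonpos hc ht (by linarith)
      have h2 : (0:ℝ) ≤ t ^ (-β - 1) := Real.rpow_nonneg ht'.le _
      rw [norm_mul, Real.norm_eq_abs, Real.norm_eq_abs, abs_neg, abs_of_pos hβ,
        abs_of_nonneg h2]
      exact mul_le_mul_of_nonneg_left h1 hβ.le)
    (convex_Ici c) hb ha
  simpa [Real.norm_eq_abs] using h

/-- If `ψ ∈ C_c^∞(ℝⁿ)` has zero mean and `φ(x) = ∫ ψ(y) |x-y|^{-(n-α)} dy`, then
`φ(x) = O(|x|^{-(n-α+1)})` as `|x| → ∞`. -/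
theorem rieszPotential_decay (n : ℕ) (hn : 2 ≤ n) (α : ℝ) (hα0 : 0 < α) (hα2 : α < 2)
    (ψ : EuclideanSpace ℝ (Fin n) → ℝ)
    (hψsmooth : ContDiff ℝ (⊤ : ℕ∞) ψ) (hψsupp : HasCompactSupport ψ)
    (hψmean : ∫ x, ψ x = 0)
    (φ : EuclideanSpace ℝ (Fin n) → ℝ)
    (hφ : ∀ x, φ x = ∫ y, ψ y * ‖x - y‖ ^ (-((n : ℝ) - α))) :
    ∃ C > (0:ℝ), ∃ R > (0:ℝ), ∀ x : EuclideanSpace ℝ (Fin n),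
      R ≤ ‖x‖ → |φ x| ≤ C * ‖x‖ ^ (-((n : ℝ) - α + 1)) := by
  set β : ℝ := (n : ℝ) - α with hβdef
  have hn' : (2:ℝ) ≤ (n:ℝ) := by exact_mod_cast hn
  have hβ : 0 < β := by simp only [hβdef]; linarith
  -- a radius containing the support
  obtain ⟨r, hr⟩ := (hψsupp.isBounded).subset_closedBall 0
  set M : ℝ := max r 1 with hM
  have hM1 : (1:ℝ) ≤ M := le_max_right r 1
  have hM0 : (0:ℝ) < M := lt_of_lt_of_le one_pos hM1
  have hsupp : tsupport ψ ⊆ closedBall 0 M :=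
    hr.trans (closedBall_subset_closedBall (le_max_left r 1))
  have hψcont : Continuous ψ := hψsmooth.continuous
  have hψint : Integrable ψ := hψcont.integrable_of_hasCompactSupport hψsupp
  set I : ℝ := ∫ y, |ψ y| with hI
  have hInonneg : 0 ≤ I := integral_nonneg fun y => abs_nonneg _
  refine ⟨I * β * M * 2 ^ (β + 1) + 1, by positivity, 2 * M, by positivity, fun x hx => ?_⟩
  have hx0 : (0:ℝ) < ‖x‖ := lt_of_lt_of_le (by positivity) hx
  have hhalf : M ≤ ‖x‖ / 2 := by linarith
  have hhalf0 : (0:ℝ) < ‖x‖ / 2 := lt_of_lt_of_le hM0 hhalf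
  -- pointwise estimates on the support
  have hdist : ∀ y ∈ tsupport ψ, ‖x‖ / 2 ≤ ‖x - y‖ ∧ ‖y‖ ≤ M := by
    intro y hy
    have hyM : ‖y‖ ≤ M := by
      have := hsupp hy
      simpa [mem_closedBall, dist_zero_right] using this
    refine ⟨?_, hyM⟩
    have : ‖x‖ - ‖y‖ ≤ ‖x - y‖ := norm_sub_norm_le x y
    linarith
  -- the two integrands
  set g1 : EuclideanSpace ℝ (Fin n) → ℝ := fun y => ψ y * ‖x - y‖ ^ (-β) with hg1
  set g2 : EuclideanSpace ℝ (Fin n) → ℝ := fun y => ψ y * ‖x‖ ^ (-β) with hg2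
  have hg2int : Integrable g2 := hψint.mul_const _
  have hmeas : AEStronglyMeasurable g1 volume := by
    have heq : (fun y : EuclideanSpace ℝ (Fin n) => ‖x - y‖ ^ (-β)) =
        fun y => (‖x - y‖ ^ β)⁻¹ :=
      funext fun y => Real.rpow_neg (norm_nonneg _) β
    have : Measurable fun y : EuclideanSpace ℝ (Fin n) => ‖x - y‖ ^ (-β) := by
      rw [heq]
      exact (((Real.continuous_rpow_const hβ.le).comp
        ((continuous_const.sub continuous_id).norm)).measurable).inv
    exact (hψcont.measurable.mul this).aestronglyMeasurable
  have hg1int : Integrable g1 := by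
    refine (hψint.norm.mul_const (M ^ (-β))).mono' hmeas (Filter.Eventually.of_forall fun y => ?_)
    by_cases hy : y ∈ tsupport ψ
    · have h1 : M ≤ ‖x - y‖ := le_trans hhalf (hdist y hy).1
      have h2 : ‖x - y‖ ^ (-β) ≤ M ^ (-β) :=
        Real.rpow_le_rpow_of_nonpos hM0 h1 (by linarith)
      have h3 : (0:ℝ) ≤ ‖x - y‖ ^ (-β) := Real.rpow_nonneg (norm_nonneg _) _
      rw [hg1]
      simp only [norm_mul, Real.norm_eq_abs, abs_of_nonneg h3, Real.norm_eq_abs]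
      exact mul_le_mul_of_nonneg_left h2 (abs_nonneg _)
    · have : ψ y = 0 := image_eq_zero_of_notMem_tsupport hy
      simp [hg1, this]
  -- rewrite φ x as the integral of the difference
  have hφx : φ x = ∫ y, (g1 y - g2 y) := by
    rw [hφ x, integral_sub hg1int hg2int]
    have : ∫ y, g2 y = (∫ y, ψ y) * ‖x‖ ^ (-β) := integral_mul_const _ _
    rw [this, hψmean, zero_mul, sub_zero]
  -- pointwise bound on the difference
  set K : ℝ := β * (‖x‖ / 2) ^ (-β - 1) * M with hK
  have hKnonneg : 0 ≤ K := by positivity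
  have hbound : ∀ y, ‖g1 y - g2 y‖ ≤ |ψ y| * K := by
    intro y
    by_cases hy : y ∈ tsupport ψ
    · obtain ⟨h1, h2⟩ := hdist y hy
      have h3 : ‖x‖ / 2 ≤ ‖x‖ := by linarith
      have hdiff : |‖x - y‖ ^ (-β) - ‖x‖ ^ (-β)| ≤
          β * (‖x‖ / 2) ^ (-β - 1) * |‖x - y‖ - ‖x‖| :=
        rpow_neg_sub_le_aux hβ hhalf0 h1 h3
      have habs : |‖x - y‖ - ‖x‖| ≤ M := by
        have := abs_norm_sub_norm_le (x - y) x
        have h4 : ‖x - y - x‖ = ‖y‖ := by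
          rw [show x - y - x = -y by abel, norm_neg]
        rw [h4] at this
        exact this.trans h2
      have : g1 y - g2 y = ψ y * (‖x - y‖ ^ (-β) - ‖x‖ ^ (-β)) := by
        simp [hg1, hg2, mul_sub]
      rw [this, Real.norm_eq_abs, abs_mul]
      refine mul_le_mul_of_nonneg_left ?_ (abs_nonneg _)
      calc |‖x - y‖ ^ (-β) - ‖x‖ ^ (-β)| ≤ β * (‖x‖ / 2) ^ (-β - 1) * |‖x - y‖ - ‖x‖| := hdiff
        _ ≤ β * (‖x‖ / 2) ^ (-β - 1) * M := by
            refine mul_le_mul_of_nonneg_left habs (by positivity)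
    · have : ψ y = 0 := image_eq_zero_of_notMem_tsupport hy
      simp [hg1, hg2, this]
  have hint : |φ x| ≤ I * K := by
    rw [hφx]
    have := norm_integral_le_of_norm_le (hψint.abs.mul_const K)
      (Filter.Eventually.of_forall hbound)
    rw [Real.norm_eq_abs] at this
    calc |∫ y, (g1 y - g2 y)| ≤ ∫ y, |ψ y| * K := this
      _ = I * K := integral_mul_const _ _
  -- convert K into the desired form
  have hKeq : K = β * M * (2 ^ (β + 1) * ‖x‖ ^ (-(β + 1))) := by
    have h2pos : (0:ℝ) < 2 := two_pos
    have : (‖x‖ / 2) ^ (-β - 1) = ‖x‖ ^ (-β - 1) / 2 ^ (-β - 1) :=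
      Real.div_rpow (norm_nonneg _) h2pos.le _
    rw [hK, this]
    have h2 : (2:ℝ) ^ (-β - 1) = ((2:ℝ) ^ (β + 1))⁻¹ := by
      rw [show -β - 1 = -(β + 1) by ring, Real.rpow_neg h2pos.le]
    rw [h2, show -β - 1 = -(β + 1) by ring]
    field_simp
  have hfinal : I * K ≤ (I * β * M * 2 ^ (β + 1) + 1) * ‖x‖ ^ (-((n:ℝ) - α + 1)) := by
    rw [hKeq, show -((n:ℝ) - α + 1) = -(β + 1) by rw [hβdef]]
    have hxnn : (0:ℝ) ≤ ‖x‖ ^ (-(β + 1)) := Real.rpow_nonneg (norm_nonneg _) _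
    nlinarith [Real.rpow_nonneg (le_of_lt two_pos) (β + 1), hInonneg, hβ.le, hM0.le]
  exact hint.trans hfinal
end

section
/- Let n ≥ 2 and 0 < α < 2. Let ψ ∈ C_c^∞(ℝⁿ) satisfy ∫_{ℝⁿ} ψ(x) dx = 0, and define φ(x) = ∫_{ℝⁿ} ψ(y) |x−y|^{−(n−α)} dy. Then φ ∈ L²(ℝⁿ). -/
open MeasureTheory Filter Metric
open Real Set

lemma aux_rpow_mvt {c : ℝ} (hc : c < 0) {a b : ℝ} (hb : 0 < b) (hba : b ≤ a) :
    |a ^ c - b ^ c| ≤ (-c) * (a - b) * b ^ (c - 1) := by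
  rcases eq_or_lt_of_le hba with rfl | hlt
  · simp
  have ha : (0:ℝ) < a := hb.trans hlt
  have hcont : ContinuousOn (fun t : ℝ => t ^ c) (Set.Icc b a) := by
    intro t ht
    exact ((Real.hasDerivAt_rpow_const (Or.inl (hb.trans_le ht.1).ne')).continuousAt).continuousWithinAt
  have hderiv : ∀ t ∈ Set.Ioo b a, HasDerivAt (fun t : ℝ => t ^ c) (c * t ^ (c - 1)) t :=
    fun t ht => Real.hasDerivAt_rpow_const (Or.inl (hb.trans ht.1).ne')
  obtain ⟨ξ, hξ, hslope⟩ := exists_hasDerivAt_eq_slope (fun t : ℝ => t ^ c)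
    (fun t => c * t ^ (c - 1)) hlt hcont hderiv
  have hξpos : 0 < ξ := hb.trans hξ.1
  have h1 : c * ξ ^ (c - 1) * (a - b) = a ^ c - b ^ c := by
    rw [hslope, div_mul_cancel₀]
    exact sub_ne_zero.mpr hlt.ne'
  have h2 : ξ ^ (c - 1) ≤ b ^ (c - 1) :=
    Real.rpow_le_rpow_of_nonpos hb hξ.1.le (by linarith)
  have h3 : a ^ c ≤ b ^ c := Real.rpow_le_rpow_of_nonpos hb hba hc.le
  rw [abs_of_nonpos (by linarith)]
  have := h1
  nlinarith [Real.rpow_pos_of_pos hξpos (c-1), Real.rpow_pos_of_pos hb (c-1)]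


lemma aux_kernel_integrableOn (n : ℕ) (hn : 1 ≤ n) {c : ℝ} (hc0 : -(n:ℝ) < c) (hc1 : c < 0)
    (r : ℝ) :
    IntegrableOn (fun y : EuclideanSpace ℝ (Fin n) => ‖y‖ ^ c) (closedBall 0 r) volume := by
  have hnpos : (0:ℝ) < n := by exact_mod_cast hn
  set E := EuclideanSpace ℝ (Fin n)
  have hfr : Module.finrank ℝ E = n := finrank_euclideanSpace_fin
  have hmeas : Measurable fun y : EuclideanSpace ℝ (Fin n) => ‖y‖ ^ c := by fun_prop
  set μ := (volume : Measure (EuclideanSpace ℝ (Fin n))).restrict (closedBall 0 r)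
  refine ⟨hmeas.aestronglyMeasurable, ?_⟩
  have hnn : ∀ y : EuclideanSpace ℝ (Fin n), 0 ≤ ‖y‖ ^ c := fun y => Real.rpow_nonneg (norm_nonneg y) c
  rw [hasFiniteIntegral_iff_norm]
  have : ∀ y : EuclideanSpace ℝ (Fin n), ENNReal.ofReal ‖‖y‖ ^ c‖ = ENNReal.ofReal (‖y‖ ^ c) := fun y => by
    rw [Real.norm_eq_abs, abs_of_nonneg (hnn y)]
  simp_rw [this]
  rw [lintegral_eq_lintegral_meas_le μ (Eventually.of_forall hnn) hmeas.aemeasurable]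
  have hB : μ Set.univ < ⊤ := by
    rw [Measure.restrict_apply_univ]
    exact measure_closedBall_lt_top
  calc
    ∫⁻ t in Ioi (0:ℝ), μ {a : EuclideanSpace ℝ (Fin n) | t ≤ ‖a‖ ^ c}
        ≤ ∫⁻ t in Ioc (0:ℝ) 1 ∪ Ioi 1, μ {a : EuclideanSpace ℝ (Fin n) | t ≤ ‖a‖ ^ c} :=
      lintegral_mono_set Ioi_subset_Ioc_union_Ioi
    _ ≤ (∫⁻ t in Ioc (0:ℝ) 1, μ {a : EuclideanSpace ℝ (Fin n) | t ≤ ‖a‖ ^ c})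
        + ∫⁻ t in Ioi (1:ℝ), μ {a : EuclideanSpace ℝ (Fin n) | t ≤ ‖a‖ ^ c} := lintegral_union_le _ _ _
    _ < ⊤ := by
      refine ENNReal.add_lt_top.2 ⟨?_, ?_⟩
      · calc ∫⁻ t in Ioc (0:ℝ) 1, μ {a : EuclideanSpace ℝ (Fin n) | t ≤ ‖a‖ ^ c}
            ≤ ∫⁻ _ in Ioc (0:ℝ) 1, μ Set.univ := by
              exact lintegral_mono fun t => measure_mono (Set.subset_univ _)
          _ < ⊤ := by
              rw [setLIntegral_const]
              exact ENNReal.mul_lt_top hB (by simp [Real.volume_Ioc])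
      · have hsub : ∀ t : ℝ, 0 < t → {a : EuclideanSpace ℝ (Fin n) | t ≤ ‖a‖ ^ c} ⊆ closedBall 0 (t ^ c⁻¹) := by
          intro t ht a ha
          simp only [Set.mem_setOf_eq] at ha
          rcases eq_or_ne a 0 with rfl | ha0
          · simp [mem_closedBall_zero_iff]
            positivity
          · have hna : 0 < ‖a‖ := norm_pos_iff.mpr ha0
            rw [mem_closedBall_zero_iff]
            have := Real.rpow_le_rpow_of_nonpos ht ha (inv_nonpos.mpr hc1.le)
            rwa [← Real.rpow_mul hna.le, mul_inv_cancel₀ hc1.ne, Real.rpow_one] at this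
        have hbound : ∀ t ∈ Ioi (1:ℝ), μ {a : EuclideanSpace ℝ (Fin n) | t ≤ ‖a‖ ^ c}
            ≤ ENNReal.ofReal (t ^ (c⁻¹ * n)) * volume (ball (0:EuclideanSpace ℝ (Fin n)) 1) := by
          intro t ht
          have ht0 : (0:ℝ) < t := lt_trans one_pos ht
          calc μ {a : EuclideanSpace ℝ (Fin n) | t ≤ ‖a‖ ^ c} ≤ volume (closedBall (0:EuclideanSpace ℝ (Fin n)) (t ^ c⁻¹)) :=
                le_trans (Measure.restrict_le_self _) (measure_mono (hsub t ht0))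
            _ = ENNReal.ofReal ((t ^ c⁻¹) ^ Module.finrank ℝ E) * volume (ball (0:EuclideanSpace ℝ (Fin n)) 1) :=
                Measure.addHaar_closedBall _ _ (Real.rpow_nonneg ht0.le _)
            _ = ENNReal.ofReal (t ^ (c⁻¹ * n)) * volume (ball (0:EuclideanSpace ℝ (Fin n)) 1) := by
                rw [hfr, ← Real.rpow_natCast (t ^ c⁻¹) n, ← Real.rpow_mul ht0.le]
        calc ∫⁻ t in Ioi (1:ℝ), μ {a : EuclideanSpace ℝ (Fin n) | t ≤ ‖a‖ ^ c}
            ≤ ∫⁻ t in Ioi (1:ℝ), ENNReal.ofReal (t ^ (c⁻¹ * n)) * volume (ball (0:EuclideanSpace ℝ (Fin n)) 1) :=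
              setLIntegral_mono' measurableSet_Ioi hbound
          _ = (∫⁻ t in Ioi (1:ℝ), ENNReal.ofReal (t ^ (c⁻¹ * n))) * volume (ball (0:EuclideanSpace ℝ (Fin n)) 1) :=
              lintegral_mul_const' _ _ measure_ball_lt_top.ne
          _ < ⊤ := by
              refine ENNReal.mul_lt_top ?_ measure_ball_lt_top
              have hlt : c⁻¹ * n < -1 := by
                rw [mul_comm, ← div_eq_mul_inv, div_lt_iff_of_neg hc1]
                linarith
              exact (integrableOn_Ioi_rpow_of_lt hlt one_pos).setLIntegral_lt_top



/-- If `ψ ∈ C_c^∞(ℝⁿ)` (`n ≥ 2`, `0 < α < 2`) has zero mean and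
`φ(x) = ∫ ψ(y) |x-y|^{-(n-α)} dy`, then `φ ∈ L²(ℝⁿ)`. -/
theorem rieszPotential_memL2 (n : ℕ) (hn : 2 ≤ n) (α : ℝ) (hα0 : 0 < α) (hα2 : α < 2)
    (ψ : EuclideanSpace ℝ (Fin n) → ℝ)
    (hψsmooth : ContDiff ℝ (⊤ : ℕ∞) ψ) (hψsupp : HasCompactSupport ψ)
    (hψmean : ∫ x, ψ x = 0)
    (φ : EuclideanSpace ℝ (Fin n) → ℝ)
    (hφ : ∀ x, φ x = ∫ y, ψ y * ‖x - y‖ ^ (-((n : ℝ) - α))) :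
    MemLp φ 2 (volume : Measure (EuclideanSpace ℝ (Fin n))) := by

  set p : ℝ := -((n : ℝ) - α) with hp
  have hn2 : (2:ℝ) ≤ n := by exact_mod_cast hn
  have hp0 : p < 0 := by simp only [hp]; linarith
  have hpn : -(n:ℝ) < p := by simp only [hp]; linarith
  have hp1 : p - 1 < 0 := by linarith
  have hψcont : Continuous ψ := hψsmooth.continuous
  obtain ⟨M, hM⟩ := hψcont.norm.bounded_above_of_compact_support hψsupp.norm
  have hM0 : 0 ≤ M := le_trans (norm_nonneg (ψ 0)) (by simpa using hM 0)
  obtain ⟨R₀, hR₀⟩ := hψsupp.isBounded.subset_closedBall 0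
  set R : ℝ := max R₀ 1 with hRdef
  have hR1 : (1:ℝ) ≤ R := le_max_right _ _
  have hR0 : (0:ℝ) < R := lt_of_lt_of_le one_pos hR1
  have hsupp : tsupport ψ ⊆ closedBall 0 R :=
    hR₀.trans (closedBall_subset_closedBall (le_max_left _ _))
  have hψint : Integrable ψ := hψcont.integrable_of_hasCompactSupport hψsupp
  have Kint : ∀ s : ℝ, IntegrableOn (fun z : EuclideanSpace ℝ (Fin n) => ‖z‖ ^ p)
      (closedBall 0 s) volume := fun s => aux_kernel_integrableOn n (by omega) hpn hp0 s
  have hkerx : ∀ x : EuclideanSpace ℝ (Fin n), ∀ s : ℝ,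
      IntegrableOn (fun y : EuclideanSpace ℝ (Fin n) => ‖x - y‖ ^ p) (closedBall 0 s) volume := by
    intro x s
    have h1 : Integrable
        ((closedBall (0:EuclideanSpace ℝ (Fin n)) (‖x‖+|s|)).indicator (fun z => ‖z‖ ^ p)) :=
      (integrable_indicator_iff measurableSet_closedBall).mpr (Kint (‖x‖+|s|))
    have h2 := h1.comp_sub_left x
    refine (h2.integrableOn :
      IntegrableOn _ (closedBall (0:EuclideanSpace ℝ (Fin n)) s) volume).congr_fun
      ?_ measurableSet_closedBall
    intro y hy
    have hyx : ‖x - y‖ ≤ ‖x‖ + |s| := by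
      have h3 : ‖y‖ ≤ |s| := le_trans (mem_closedBall_zero_iff.mp hy) (le_abs_self s)
      calc ‖x - y‖ ≤ ‖x‖ + ‖y‖ := norm_sub_le _ _
        _ ≤ ‖x‖ + |s| := by linarith
    simp only [Set.indicator_of_mem (mem_closedBall_zero_iff.mpr hyx)]
  have hint : ∀ x : EuclideanSpace ℝ (Fin n), Integrable (fun y => ψ y * ‖x - y‖ ^ p) volume := by
    intro x
    have hsupp' : Function.support (fun y => ψ y * ‖x - y‖ ^ p) ⊆ closedBall 0 R := by
      intro y hy
      have : ψ y ≠ 0 := fun h0 => hy (by simp [h0])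
      exact hsupp (subset_tsupport ψ this)
    rw [← integrableOn_iff_integrable_of_support_subset hsupp']
    exact Integrable.bdd_mul (hkerx x R) hψcont.aestronglyMeasurable.restrict
      (c := M) (Eventually.of_forall fun y => by simpa using hM y)
  have hφm : AEStronglyMeasurable φ (volume : Measure (EuclideanSpace ℝ (Fin n))) := by
    have hFm : StronglyMeasurable
        (fun q : (EuclideanSpace ℝ (Fin n)) × (EuclideanSpace ℝ (Fin n)) =>
          ψ q.2 * ‖q.1 - q.2‖ ^ p) := by
      apply Measurable.stronglyMeasurable
      fun_prop
    have heq : φ = fun x => ∫ y, ψ y * ‖x - y‖ ^ p := funext hφ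
    rw [heq]
    exact (hFm.integral_prod_right' (ν := (volume : Measure (EuclideanSpace ℝ (Fin n))))).aestronglyMeasurable
  set g : EuclideanSpace ℝ (Fin n) → ℝ :=
    (closedBall (0:EuclideanSpace ℝ (Fin n)) (3*R)).indicator (fun z => ‖z‖ ^ p) with hg
  have hgint : Integrable g := (integrable_indicator_iff measurableSet_closedBall).mpr (Kint (3*R))
  have hgnn : ∀ z, 0 ≤ g z := fun z => by
    simp only [hg]
    exact Set.indicator_nonneg (fun z _ => Real.rpow_nonneg (norm_nonneg z) p) z
  set C₁ : ℝ := ∫ z, g z with hC₁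
  have hC₁0 : 0 ≤ C₁ := integral_nonneg hgnn
  have near : ∀ x : EuclideanSpace ℝ (Fin n), ‖x‖ ≤ 2*R → |φ x| ≤ M * C₁ := by
    intro x hx
    rw [hφ x]
    have h1 := norm_integral_le_integral_norm (fun y => ψ y * ‖x - y‖ ^ p) (μ := volume)
    rw [Real.norm_eq_abs] at h1
    refine le_trans h1 ?_
    have h2 : ∫ y, ‖ψ y * ‖x - y‖ ^ p‖ ≤ ∫ y, M * g (x - y) := by
      refine integral_mono ((hint x).norm) ((hgint.comp_sub_left x).const_mul M) ?_
      intro y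
      simp only [norm_mul]
      rcases eq_or_ne (ψ y) 0 with h0 | h0
      · simp only [h0, norm_zero, zero_mul]
        exact mul_nonneg hM0 (hgnn _)
      · have hyR : ‖y‖ ≤ R := mem_closedBall_zero_iff.mp (hsupp (subset_tsupport ψ h0))
        have hxy : ‖x - y‖ ≤ 3*R := by
          calc ‖x - y‖ ≤ ‖x‖ + ‖y‖ := norm_sub_le _ _
            _ ≤ 3*R := by linarith
        have hgxy : g (x - y) = ‖x - y‖ ^ p := by
          simp only [hg, Set.indicator_of_mem (mem_closedBall_zero_iff.mpr hxy)]
        rw [hgxy]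
        have : ‖‖x - y‖ ^ p‖ = ‖x - y‖ ^ p := by
          rw [Real.norm_eq_abs, abs_of_nonneg (Real.rpow_nonneg (norm_nonneg _) p)]
        rw [this]
        exact mul_le_mul_of_nonneg_right (by simpa using hM y)
          (Real.rpow_nonneg (norm_nonneg _) p)
    refine le_trans h2 ?_
    rw [integral_const_mul, integral_sub_left_eq_self g volume x]
  set C₂ : ℝ := (∫ y, ‖ψ y‖) * ((-p) * R * 2 ^ (1-p)) with hC₂
  have hC₂0 : 0 ≤ C₂ := by
    apply mul_nonneg (integral_nonneg (fun y => norm_nonneg _))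
    exact mul_nonneg (mul_nonneg (by linarith) hR0.le) (Real.rpow_nonneg (by norm_num) _)
  have far : ∀ x : EuclideanSpace ℝ (Fin n), 2*R < ‖x‖ → |φ x| ≤ C₂ * ‖x‖ ^ (p-1) := by
    intro x hx
    have hxpos : 0 < ‖x‖ := lt_trans (by linarith) hx
    have hhalf : 0 < ‖x‖/2 := by linarith
    have hzero : ∫ y, ψ y * ‖x‖ ^ p = 0 := by
      rw [integral_mul_const, hψmean, zero_mul]
    have hrepr : φ x = ∫ y, ψ y * (‖x - y‖ ^ p - ‖x‖ ^ p) := by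
      rw [hφ x, ← sub_zero (∫ y, ψ y * ‖x - y‖ ^ p), ← hzero,
        ← integral_sub (hint x) (hψint.mul_const _)]
      simp_rw [← mul_sub]
    rw [hrepr]
    set D : ℝ := (-p) * R * (‖x‖/2) ^ (p-1) with hD
    have hD0 : 0 ≤ D := by
      refine mul_nonneg (mul_nonneg (by linarith) hR0.le) (Real.rpow_nonneg hhalf.le _)
    have hintsub : Integrable (fun y => ψ y * (‖x - y‖ ^ p - ‖x‖ ^ p)) volume := by
      have := (hint x).sub (hψint.mul_const (‖x‖ ^ p))
      simpa [mul_sub, Pi.sub_def] using this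
    have h1 := norm_integral_le_integral_norm
      (fun y => ψ y * (‖x - y‖ ^ p - ‖x‖ ^ p)) (μ := volume)
    rw [Real.norm_eq_abs] at h1
    refine le_trans h1 ?_
    have h2 : ∫ y, ‖ψ y * (‖x - y‖ ^ p - ‖x‖ ^ p)‖ ≤ ∫ y, ‖ψ y‖ * D := by
      refine integral_mono hintsub.norm (hψint.norm.mul_const D) ?_
      intro y
      simp only [norm_mul]
      rcases eq_or_ne (ψ y) 0 with h0 | h0
      · simp only [h0, norm_zero, zero_mul]
        exact le_refl 0
      · have hyR : ‖y‖ ≤ R := mem_closedBall_zero_iff.mp (hsupp (subset_tsupport ψ h0))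
        refine mul_le_mul_of_nonneg_left ?_ (norm_nonneg _)
        -- bound |‖x-y‖^p - ‖x‖^p| ≤ D
        have hxy : ‖x‖/2 ≤ ‖x - y‖ := by
          have := norm_sub_norm_le x (x - y)
          have h4 : ‖x - (x - y)‖ = ‖y‖ := by rw [sub_sub_cancel]
          rw [h4] at this
          linarith
        set b : ℝ := min ‖x - y‖ ‖x‖ with hb
        set a : ℝ := max ‖x - y‖ ‖x‖ with ha
        have hbpos : 0 < b := lt_min (by linarith) hxpos
        have hbhalf : ‖x‖/2 ≤ b := le_min hxy (by linarith)
        have hab : b ≤ a := min_le_max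
        have habs : ‖‖x - y‖ ^ p - ‖x‖ ^ p‖ = |a ^ p - b ^ p| := by
          rw [Real.norm_eq_abs]
          rcases le_total ‖x - y‖ ‖x‖ with h | h
          · rw [ha, hb, max_eq_right h, min_eq_left h, abs_sub_comm]
          · rw [ha, hb, max_eq_left h, min_eq_right h]
        rw [habs]
        refine le_trans (aux_rpow_mvt hp0 hbpos hab) ?_
        have hamb : a - b ≤ R := by
          have : a - b = |‖x - y‖ - ‖x‖| := by
            rcases le_total ‖x - y‖ ‖x‖ with h | h
            · rw [ha, hb, max_eq_right h, min_eq_left h, abs_of_nonpos (by linarith)]; ring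
            · rw [ha, hb, max_eq_left h, min_eq_right h, abs_of_nonneg (by linarith)]
          rw [this]
          have h5 := abs_norm_sub_norm_le (x - y) x
          have h6 : ‖x - y - x‖ = ‖y‖ := by
            rw [show x - y - x = -y by abel, norm_neg]
          rw [h6] at h5
          linarith
        have hbb : b ^ (p-1) ≤ (‖x‖/2) ^ (p-1) :=
          Real.rpow_le_rpow_of_nonpos hhalf hbhalf (by linarith)
        rw [hD]
        have hbp : (0:ℝ) ≤ b ^ (p-1) := Real.rpow_nonneg hbpos.le _
        calc (-p) * (a - b) * b ^ (p-1) ≤ (-p) * R * b ^ (p-1) := by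
              refine mul_le_mul_of_nonneg_right ?_ hbp
              exact mul_le_mul_of_nonneg_left hamb (by linarith)
          _ ≤ (-p) * R * (‖x‖/2) ^ (p-1) := by
              refine mul_le_mul_of_nonneg_left hbb (mul_nonneg (by linarith) hR0.le)
    refine le_trans h2 ?_
    rw [integral_mul_const, hC₂, hD]
    rw [Real.div_rpow (norm_nonneg x) (by norm_num : (0:ℝ) ≤ 2)]
    rw [div_eq_mul_inv, ← Real.rpow_neg (by norm_num : (0:ℝ) ≤ 2), neg_sub]
    ring_nf
    exact le_refl _
  set K : ℝ := max (M * C₁ * (1+2*R) ^ (1-p)) (C₂ * 2 ^ (1-p)) with hK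
  have hK0 : 0 ≤ K := le_trans (by positivity) (le_max_left _ _)
  have hGmem : MemLp (fun x : EuclideanSpace ℝ (Fin n) => K * (1+‖x‖) ^ (p-1)) 2
      (volume : Measure (EuclideanSpace ℝ (Fin n))) := by
    have hcont : Continuous (fun x : EuclideanSpace ℝ (Fin n) => (1+‖x‖) ^ (p-1)) := by
      refine Continuous.rpow_const (continuous_const.add continuous_norm) ?_
      intro x
      left
      positivity
    refine MemLp.const_mul ?_ K
    rw [memLp_two_iff_integrable_sq hcont.aestronglyMeasurable]
    have hr : (Module.finrank ℝ (EuclideanSpace ℝ (Fin n)) : ℝ) < 2*(1-p) := by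
      rw [finrank_euclideanSpace_fin]
      simp only [hp]
      linarith
    have hI := integrable_one_add_norm (E := EuclideanSpace ℝ (Fin n))
      (μ := volume) (r := 2*(1-p)) hr
    refine hI.congr ?_
    refine Eventually.of_forall (fun x => ?_)
    have hpos : (0:ℝ) ≤ 1 + ‖x‖ := by positivity
    show (1+‖x‖) ^ (-(2*(1-p))) = ((1+‖x‖) ^ (p-1)) ^ (2:ℕ)
    rw [← Real.rpow_natCast ((1+‖x‖) ^ (p-1)) 2, ← Real.rpow_mul hpos]
    norm_num
    ring_nf
  refine MemLp.of_le hGmem hφm (Eventually.of_forall (fun x => ?_))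
  have hpos1 : (0:ℝ) < 1 + ‖x‖ := by positivity
  have hGnn : 0 ≤ K * (1+‖x‖) ^ (p-1) :=
    mul_nonneg hK0 (Real.rpow_nonneg hpos1.le _)
  rw [Real.norm_eq_abs, Real.norm_eq_abs, abs_of_nonneg hGnn]
  rcases le_or_gt ‖x‖ (2*R) with hcase | hcase
  · refine le_trans (near x hcase) ?_
    have h2R : (0:ℝ) < 1 + 2*R := by linarith
    have e1 : (1+2*R) ^ (p-1) ≤ (1+‖x‖) ^ (p-1) :=
      Real.rpow_le_rpow_of_nonpos hpos1 (by linarith) (by linarith)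
    calc M * C₁ = M * C₁ * ((1+2*R) ^ (1-p) * (1+2*R) ^ (p-1)) := by
          rw [← Real.rpow_add h2R]
          norm_num
      _ = (M * C₁ * (1+2*R) ^ (1-p)) * (1+2*R) ^ (p-1) := by ring
      _ ≤ K * (1+2*R) ^ (p-1) :=
          mul_le_mul_of_nonneg_right (le_max_left _ _) (Real.rpow_nonneg h2R.le _)
      _ ≤ K * (1+‖x‖) ^ (p-1) := mul_le_mul_of_nonneg_left e1 hK0
  · refine le_trans (far x hcase) ?_
    have hx1 : (1:ℝ) ≤ ‖x‖ := by linarith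
    have hxpos : (0:ℝ) < ‖x‖ := by linarith
    have e1 : (2*‖x‖) ^ (p-1) ≤ (1+‖x‖) ^ (p-1) :=
      Real.rpow_le_rpow_of_nonpos hpos1 (by linarith) (by linarith)
    have e2 : (2*‖x‖) ^ (p-1) = 2 ^ (p-1) * ‖x‖ ^ (p-1) :=
      Real.mul_rpow (by norm_num) (norm_nonneg x)
    calc C₂ * ‖x‖ ^ (p-1)
        = (C₂ * 2 ^ (1-p)) * (2 ^ (p-1) * ‖x‖ ^ (p-1)) := by
          rw [show C₂ * 2 ^ (1-p) * (2 ^ (p-1) * ‖x‖ ^ (p-1))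
              = C₂ * (2 ^ (1-p) * 2 ^ (p-1)) * ‖x‖ ^ (p-1) by ring,
            ← Real.rpow_add (by norm_num : (0:ℝ) < 2)]
          norm_num
      _ ≤ K * (2 ^ (p-1) * ‖x‖ ^ (p-1)) := by
          refine mul_le_mul_of_nonneg_right (le_max_right _ _) ?_
          exact mul_nonneg (Real.rpow_nonneg (by norm_num) _)
            (Real.rpow_nonneg (norm_nonneg x) _)
      _ = K * (2*‖x‖) ^ (p-1) := by rw [e2]
      _ ≤ K * (1+‖x‖) ^ (p-1) := mul_le_mul_of_nonneg_left e1 hK0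
end

section
/- Let n ≥ 2, 0 < α < 2, and k > 0. Let u : ℝⁿ → ℝ be nonnegative and measurable with ∫_{B_k(0)} u(y) (k² − |y|²)^{−α/2} dy < ∞, and for |x| > k define h(x) = ∫_{B_k(0)} P_k(y, x) u(y) dy, where P_k(y, x) = Γ(n/2) π^{−n/2−1} sin(πα/2) · (|x|² − k²)^{α/2} (k² − |y|²)^{−α/2} |x − y|^{−n}. Then there is a constant c₁ ≥ 0 such that h(x) = c₁ |x|^{−(n−α)} + O(|x|^{−(n−α+1)}) as |x| → ∞; that is, there exist C > 0 and R > k with |h(x) − c₁ |x|^{−(n−α)}| ≤ C |x|^{−(n−α+1)} for all |x| ≥ R. -/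
open MeasureTheory Filter Metric

lemma my_pow_sub_pow (s r : ℝ) (hs0 : 0 ≤ s) (hr0 : 0 ≤ r) (hsr : s ≤ 2*r) (n : ℕ) :
    |s^n - r^n| ≤ (n:ℝ) * (2*r)^(n-1) * |s - r| := by
  have h := geom_sum₂_mul s r n
  rw [← h, abs_mul]
  have hb : ∀ i ∈ Finset.range n, |s^i * r^(n-1-i)| ≤ (2*r)^(n-1) := by
    intro i hi
    rw [abs_mul, abs_pow, abs_pow, abs_of_nonneg hs0, abs_of_nonneg hr0]
    calc s^i * r^(n-1-i) ≤ (2*r)^i * (2*r)^(n-1-i) := by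
          apply mul_le_mul (pow_le_pow_left₀ hs0 hsr i) (pow_le_pow_left₀ hr0 (by linarith) _)
            (by positivity) (by positivity)
      _ = (2*r)^(n-1) := by rw [← pow_add]; congr 1; simp at hi; omega
  have hsum : |∑ i ∈ Finset.range n, s^i * r^(n-1-i)| ≤ (n:ℝ) * (2*r)^(n-1) := by
    refine (Finset.abs_sum_le_sum_abs _ _).trans ?_
    calc ∑ i ∈ Finset.range n, |s^i * r^(n-1-i)| ≤ ∑ _i ∈ Finset.range n, (2*r)^(n-1) :=
          Finset.sum_le_sum hb
      _ = (n:ℝ) * (2*r)^(n-1) := by simp [mul_comm]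
  exact mul_le_mul_of_nonneg_right hsum (abs_nonneg _)

lemma aux1 (A P X Y E κ δ : ℝ) (hX : 0 < X) (hY : 0 < Y) (hP : 0 ≤ P)
    (h1 : |A - P| ≤ κ * P) (h2 : Y ≤ E * X) (h3 : |X - Y| ≤ δ * Y) :
    |A / X - P / Y| ≤ (κ + δ) * E * P / Y := by
  have hκP : 0 ≤ κ * P := le_trans (abs_nonneg _) h1
  have hδ : 0 ≤ δ := by nlinarith [abs_nonneg (X - Y)]
  have hδP : 0 ≤ δ * P := mul_nonneg hδ hP
  have key : |A*Y - P*X| ≤ (κ+δ)*E*P*X := by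
    have h4 : |A*Y - P*X| ≤ |A - P| * Y + P * |X - Y| := by
      have e : A*Y - P*X = (A-P)*Y + P*(Y-X) := by ring
      rw [e]
      refine (abs_add_le _ _).trans ?_
      rw [abs_mul, abs_mul, abs_of_pos hY, abs_of_nonneg hP, abs_sub_comm Y X]
    calc |A*Y - P*X| ≤ (κ*P)*Y + P*(δ*Y) := by
          refine h4.trans (add_le_add (mul_le_mul_of_nonneg_right h1 hY.le)
            (mul_le_mul_of_nonneg_left h3 hP))
      _ = ((κ+δ)*P)*Y := by ring
      _ ≤ ((κ+δ)*P)*(E*X) := by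
          refine mul_le_mul_of_nonneg_left h2 ?_
          nlinarith
      _ = (κ+δ)*E*P*X := by ring
  have e2 : A / X - P / Y = (A*Y - P*X)/(X*Y) := by field_simp
  rw [e2, abs_div, abs_of_pos (mul_pos hX hY), div_le_iff₀ (mul_pos hX hY)]
  calc |A*Y - P*X| ≤ (κ+δ)*E*P*X := key
    _ = (κ+δ)*E*P/Y * (X*Y) := by field_simp

lemma h3lem (n : ℕ) (hn : 1 ≤ n) (k r s : ℝ) (hk : 0 < k) (hr0 : 0 < r) (hs0 : 0 ≤ s)
    (hsr2 : s ≤ 2*r) (hsrk : |s - r| ≤ k) :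
    |s^n - r^n| ≤ ((n:ℝ) * 2^n * k / r) * r^n := by
  obtain ⟨m, rfl⟩ : ∃ m, n = m + 1 := ⟨n - 1, by omega⟩
  have e : (((m+1:ℕ):ℝ) * 2^(m+1) * k / r) * r^(m+1) = ((m+1:ℕ):ℝ) * (2^m*2) * k * r^m := by
    field_simp [pow_succ]
    ring
  calc |s^(m+1) - r^(m+1)| ≤ ((m+1:ℕ):ℝ) * (2*r)^(m+1-1) * |s - r| :=
        my_pow_sub_pow s r hs0 hr0.le hsr2 (m+1)
    _ = ((m+1:ℕ):ℝ) * (2^m * r^m) * |s - r| := by rw [Nat.add_sub_cancel, mul_pow]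
    _ ≤ ((m+1:ℕ):ℝ) * (2^m * r^m) * k := by
        exact mul_le_mul_of_nonneg_left hsrk (by positivity)
    _ ≤ (((m+1:ℕ):ℝ) * 2^(m+1) * k / r) * r^(m+1) := by
        rw [e]
        have base : 0 ≤ ((m+1:ℕ):ℝ) * 2^m * k * r^m := by positivity
        nlinarith [base]

lemma key_est (n : ℕ) (hn : 1 ≤ n) (α k r s : ℝ) (hα0 : 0 < α) (hα2 : α < 2) (hk : 0 < k)
    (hr : 2*k ≤ r) (hs1 : r - k ≤ s) (hs2 : s ≤ r + k) :
    |(r^2 - k^2) ^ (α/2) / s^n - r ^ (α - (n:ℝ))| ≤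
      ((2:ℝ)^n + (n:ℝ) * 2^(2*n)) * k * r ^ (α - (n:ℝ) - 1) := by
  have hr0 : 0 < r := by linarith
  have hkr : k < r := by linarith
  have hs0 : 0 < s := by linarith
  have h2s : r ≤ 2*s := by linarith
  have hEpos : (0:ℝ) < 2^n := by positivity
  have hPpos : 0 < r ^ α := Real.rpow_pos_of_pos hr0 α
  have hX : 0 < s^n := pow_pos hs0 n
  have hY : 0 < r^n := pow_pos hr0 n
  have hid : ((r^2 : ℝ)) ^ (α/2) = r ^ α := by
    rw [← Real.rpow_natCast r 2, ← Real.rpow_mul hr0.le]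
    norm_num
    congr 1
    ring
  have hAub : (r^2 - k^2) ^ (α/2) ≤ r ^ α := by
    rw [← hid]
    exact Real.rpow_le_rpow (by nlinarith) (by nlinarith) (by positivity)
  have hb0 : (0:ℝ) < 1 - k^2/r^2 := by
    rw [sub_pos, div_lt_one (by positivity)]; nlinarith
  have hAlb : r ^ α - (k/r) * r ^ α ≤ (r^2 - k^2) ^ (α/2) := by
    have hfac : r^2 - k^2 = r^2 * (1 - k^2/r^2) := by field_simp
    rw [hfac, Real.mul_rpow (by positivity) hb0.le, hid]
    have h1' : (1 - k^2/r^2) ^ ((1:ℝ)) ≤ (1 - k^2/r^2) ^ (α/2) :=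
      Real.rpow_le_rpow_of_exponent_ge hb0 (by nlinarith [sq_nonneg (k/r)]) (by linarith)
    rw [Real.rpow_one] at h1'
    have hkk : k^2/r^2 ≤ k/r := by
      rw [div_le_div_iff₀ (by positivity) hr0]
      nlinarith [mul_le_mul_of_nonneg_left hkr.le (mul_pos hk hr0).le]
    nlinarith [mul_le_mul_of_nonneg_left h1' hPpos.le]
  have h1 : |(r^2-k^2)^(α/2) - r ^ α| ≤ (k/r) * r ^ α := by
    rw [abs_le]
    constructor
    · linarith
    · nlinarith [mul_pos (div_pos hk hr0) hPpos]
  have h2 : r^n ≤ 2^n * s^n := by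
    calc r^n ≤ (2*s)^n := pow_le_pow_left₀ hr0.le h2s n
      _ = 2^n * s^n := by rw [mul_pow]
  have hsrk : |s - r| ≤ k := abs_le.mpr ⟨by linarith, by linarith⟩
  have h3 : |s^n - r^n| ≤ ((n:ℝ) * 2^n * k / r) * r^n :=
    h3lem n hn k r s hk hr0 hs0.le (by linarith) hsrk
  have main := aux1 ((r^2-k^2)^(α/2)) (r^α) (s^n) (r^n) (2^n) (k/r) ((n:ℝ)*2^n*k/r)
    hX hY hPpos.le h1 h2 h3
  have hPY : r ^ (α - (n:ℝ)) = r^α / r^n := by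
    rw [Real.rpow_sub hr0, Real.rpow_natCast]
  have hPY1 : r ^ (α - (n:ℝ) - 1) = r^α / r^n / r := by
    rw [Real.rpow_sub hr0, hPY, Real.rpow_one]
  rw [hPY, hPY1]
  refine main.trans (le_of_eq ?_)
  have e3 : ((2:ℝ)^(2*n)) = 2^n * 2^n := by rw [two_mul, pow_add]
  rw [e3]
  field_simp

/-- **Asymptotic expansion of exterior Poisson integrals.** Let `n ≥ 2`, `0 < α < 2`, `k > 0`,
let `u ≥ 0` be measurable with `∫_{B_k} u(y)(k²-|y|²)^{-α/2} dy < ∞`, and for `|x| > k` let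
`h(x) = ∫_{B_k} P_k(y,x) u(y) dy` with the exterior Poisson kernel
`P_k(y,x) = Γ(n/2) π^{-n/2-1} sin(πα/2) (|x|²-k²)^{α/2} (k²-|y|²)^{-α/2} |x-y|^{-n}`.
Then `h(x) = c₁ |x|^{-(n-α)} + O(|x|^{-(n-α+1)})` as `|x| → ∞` for some constant `c₁ ≥ 0`. -/
theorem poissonIntegral_expansion (n : ℕ) (hn : 2 ≤ n)
    (α : ℝ) (hα0 : 0 < α) (hα2 : α < 2) (k : ℝ) (hk : 0 < k)
    (u : EuclideanSpace ℝ (Fin n) → ℝ)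
    (hum : Measurable u) (hupos : ∀ y, 0 ≤ u y)
    (hint : IntegrableOn (fun y => u y * (k ^ 2 - ‖y‖ ^ 2) ^ (-(α / 2)))
      (ball (0 : EuclideanSpace ℝ (Fin n)) k))
    (h : EuclideanSpace ℝ (Fin n) → ℝ)
    (hh : ∀ x, k < ‖x‖ → h x = ∫ y in ball (0 : EuclideanSpace ℝ (Fin n)) k,
      Real.Gamma ((n : ℝ) / 2) * Real.pi ^ (-(n : ℝ) / 2 - 1) * Real.sin (Real.pi * α / 2) *
        ((‖x‖ ^ 2 - k ^ 2) ^ (α / 2) / ((k ^ 2 - ‖y‖ ^ 2) ^ (α / 2) * ‖x - y‖ ^ n)) * u y) :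
    ∃ c₁ ≥ (0:ℝ), ∃ C > (0:ℝ), ∃ R > k, ∀ x : EuclideanSpace ℝ (Fin n), R ≤ ‖x‖ →
      |h x - c₁ * ‖x‖ ^ (-((n : ℝ) - α))| ≤ C * ‖x‖ ^ (-((n : ℝ) - α + 1)) := by
  set c : ℝ := Real.Gamma ((n : ℝ) / 2) * Real.pi ^ (-(n : ℝ) / 2 - 1) *
    Real.sin (Real.pi * α / 2) with hc
  have hcpos : 0 < c := by
    refine mul_pos (mul_pos (Real.Gamma_pos_of_pos (by positivity))
      (Real.rpow_pos_of_pos Real.pi_pos _)) ?_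
    refine Real.sin_pos_of_pos_of_lt_pi (by positivity) ?_
    nlinarith [Real.pi_pos]
  set g : EuclideanSpace ℝ (Fin n) → ℝ := fun y => u y * (k ^ 2 - ‖y‖ ^ 2) ^ (-(α / 2)) with hgdef
  set I : ℝ := ∫ y in ball (0 : EuclideanSpace ℝ (Fin n)) k, g y with hI
  have hgnn : ∀ y ∈ ball (0 : EuclideanSpace ℝ (Fin n)) k, 0 ≤ g y := by
    intro y hy
    exact mul_nonneg (hupos y) (Real.rpow_nonneg
      (by nlinarith [mem_ball_zero_iff.mp hy, norm_nonneg y]) _)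
  have hInn : 0 ≤ I := setIntegral_nonneg measurableSet_ball hgnn
  set C₀ : ℝ := ((2:ℝ)^n + (n:ℝ) * 2^(2*n)) * k with hC₀
  have hC₀pos : 0 < C₀ := by positivity
  refine ⟨c * I, mul_nonneg hcpos.le hInn, c * C₀ * I + 1,
    by nlinarith [mul_nonneg (mul_nonneg hcpos.le hC₀pos.le) hInn], 2*k, by linarith, ?_⟩
  intro x hx
  have hrk : k < ‖x‖ := by linarith
  have hr0 : (0:ℝ) < ‖x‖ := by linarith
  set r : ℝ := ‖x‖ with hrdef
  set A : ℝ := (r ^ 2 - k ^ 2) ^ (α / 2) with hA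
  set T : ℝ := r ^ (α - (n:ℝ)) with hT
  set B : ℝ := C₀ * r ^ (α - (n:ℝ) - 1) with hB
  have hBpos : 0 < B := mul_pos hC₀pos (Real.rpow_pos_of_pos hr0 _)
  -- pointwise kernel bound for y in the ball
  have hker : ∀ y ∈ ball (0 : EuclideanSpace ℝ (Fin n)) k,
      |A / ‖x - y‖ ^ n - T| ≤ B := by
    intro y hy
    have hy' : ‖y‖ < k := mem_ball_zero_iff.mp hy
    exact key_est n (by omega) α k r ‖x - y‖ hα0 hα2 hk hx
      (by have := norm_sub_norm_le x y; linarith)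
      (by have := norm_sub_le x y; linarith)
  -- the difference function
  set f : EuclideanSpace ℝ (Fin n) → ℝ := fun y => g y * (c * (A / ‖x - y‖ ^ n - T)) with hf
  have hΨint : IntegrableOn (fun y => g y * (c * T))
      (ball (0 : EuclideanSpace ℝ (Fin n)) k) := hint.mul_const _
  have hcontM : ContinuousOn (fun y : EuclideanSpace ℝ (Fin n) => c * (A / ‖x - y‖ ^ n - T))
      (ball (0 : EuclideanSpace ℝ (Fin n)) k) := by
    refine continuousOn_const.mul (ContinuousOn.sub ?_ continuousOn_const)
    refine continuousOn_const.div (((continuous_const.sub continuous_id).norm.pow n).continuousOn) ?_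
    intro y hy
    have hy' : ‖y‖ < k := mem_ball_zero_iff.mp hy
    have : (0:ℝ) < ‖x - y‖ := by have := norm_sub_norm_le x y; linarith
    positivity
  have hfm : AEStronglyMeasurable f
      ((volume : Measure (EuclideanSpace ℝ (Fin n))).restrict (ball 0 k)) :=
    hint.aestronglyMeasurable.mul (hcontM.aestronglyMeasurable measurableSet_ball)
  have hbnd : ∀ y ∈ ball (0 : EuclideanSpace ℝ (Fin n)) k, |f y| ≤ g y * (c * B) := by
    intro y hy
    rw [hf]
    rw [abs_mul, abs_of_nonneg (hgnn y hy), abs_mul, abs_of_pos hcpos]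
    exact mul_le_mul_of_nonneg_left
      (mul_le_mul_of_nonneg_left (hker y hy) hcpos.le) (hgnn y hy)
  have hbint : IntegrableOn (fun y => g y * (c * B))
      (ball (0 : EuclideanSpace ℝ (Fin n)) k) := hint.mul_const _
  have hfint : IntegrableOn f (ball (0 : EuclideanSpace ℝ (Fin n)) k) := by
    refine Integrable.mono' hbint hfm ?_
    rw [ae_restrict_iff' measurableSet_ball]
    exact ae_of_all _ fun y hy => by simpa [Real.norm_eq_abs] using hbnd y hy
  have hΦint : IntegrableOn (fun y => g y * (c * (A / ‖x - y‖ ^ n)))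
      (ball (0 : EuclideanSpace ℝ (Fin n)) k) := by
    have : (fun y => g y * (c * (A / ‖x - y‖ ^ n))) = fun y => f y + g y * (c * T) := by
      funext y; rw [hf]; ring
    rw [this]
    exact hfint.add hΨint
  -- rewrite h x
  have hhx : h x = ∫ y in ball (0 : EuclideanSpace ℝ (Fin n)) k,
      g y * (c * (A / ‖x - y‖ ^ n)) := by
    rw [hh x hrk]
    refine setIntegral_congr_fun measurableSet_ball fun y hy => ?_
    have hy' : ‖y‖ < k := mem_ball_zero_iff.mp hy
    have hpos : (0:ℝ) < k ^ 2 - ‖y‖ ^ 2 := by nlinarith [norm_nonneg y]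
    rw [hgdef]
    simp only []
    rw [Real.rpow_neg hpos.le]
    ring
  -- split
  have hsplit : h x - (c * I) * T = ∫ y in ball (0 : EuclideanSpace ℝ (Fin n)) k, f y := by
    have e1 : (∫ y in ball (0 : EuclideanSpace ℝ (Fin n)) k, f y)
        = (∫ y in ball (0 : EuclideanSpace ℝ (Fin n)) k, g y * (c * (A / ‖x - y‖ ^ n)))
          - ∫ y in ball (0 : EuclideanSpace ℝ (Fin n)) k, g y * (c * T) := by
      rw [← integral_sub hΦint hΨint]
      congr 1
      funext y
      rw [hf]; ring
    have e2 : (∫ y in ball (0 : EuclideanSpace ℝ (Fin n)) k, g y * (c * T)) = I * (c * T) :=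
      integral_mul_const _ _
    rw [e1, e2, hhx]; ring
  have e3 : -((n : ℝ) - α) = α - (n:ℝ) := by ring
  have e4 : -((n : ℝ) - α + 1) = α - (n:ℝ) - 1 := by ring
  rw [e3, e4, ← hT, hsplit]
  calc |∫ y in ball (0 : EuclideanSpace ℝ (Fin n)) k, f y|
      ≤ ∫ y in ball (0 : EuclideanSpace ℝ (Fin n)) k, |f y| := by
        simpa [Real.norm_eq_abs] using
          norm_integral_le_integral_norm (μ := (volume : Measure (EuclideanSpace ℝ (Fin n))).restrict (ball 0 k)) f
    _ ≤ ∫ y in ball (0 : EuclideanSpace ℝ (Fin n)) k, g y * (c * B) :=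
        setIntegral_mono_on hfint.abs hbint measurableSet_ball hbnd
    _ = I * (c * B) := integral_mul_const _ _
    _ ≤ (c * C₀ * I + 1) * r ^ (α - (n:ℝ) - 1) := by
        rw [hB]
        have hrp : 0 < r ^ (α - (n:ℝ) - 1) := Real.rpow_pos_of_pos hr0 _
        nlinarith [mul_nonneg hInn (mul_nonneg hcpos.le hC₀pos.le)]
end
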